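/- Let u be a profile of n voters' strict preference orders on a set A of p candidates (p ≥ 2), and let a ∈ A be a candidate whose score vector r(a) belongs to the Pareto boundary of the convex hull of R = {r(x) : x ∈ A} ⊆ ℝ^{p-1}. Then there exists a strict scoring s (s_0 < s_1 < … < s_{p-1}) such that a belongs to the de Borda winner set β_s(u). -/

import Mathlib

/-- The de Borda estimate of candidate `a` under scores `s` for profile `u`,
where `u i a : Fin p` is the 0-indexed rank of candidate `a` in the preference
of voter `i` (`0` = top place).  A candidate with 0-indexed rank `r` obtains
`s (p-1-r)` points, i.e. `B_s(a) = ∑_i s_{p - rank_i(a)}` with 1-indexed ranks. -/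
def bordaEstimate {n p : ℕ} (u : Fin n → Equiv.Perm (Fin p)) (s : Fin p → ℝ)
    (a : Fin p) : ℝ :=
  ∑ i : Fin n, s (Fin.rev (u i a))

/-- The score vector of candidate `a` : its `k`-th component (`k : Fin (p-1)`,
0-indexed) is the number of voters who place `a` within the top `k+1` places. -/
def scoreVec {n p : ℕ} (u : Fin n → Equiv.Perm (Fin p)) (a : Fin p) :
    Fin (p - 1) → ℝ :=
  fun k => ((Finset.univ : Finset (Fin n)).filter fun i => ((u i a : Fin p) : ℕ) ≤ (k : ℕ)).card

/-- `f'` belongs to the Pareto boundary of `F`. -/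
def ParetoOpt {m : ℕ} (F : Set (Fin m → ℝ)) (f' : Fin m → ℝ) : Prop :=
  f' ∈ F ∧ ¬ ∃ f ∈ F, (∀ j, f' j ≤ f j) ∧ ∃ j0, f' j0 < f j0

/-- `f''` belongs to the weak Pareto boundary of `F`. -/
def WeakParetoOpt {m : ℕ} (F : Set (Fin m → ℝ)) (f'' : Fin m → ℝ) : Prop :=
  f'' ∈ F ∧ ¬ ∃ f ∈ F, ∀ j, f'' j < f j

open Matrix Finset

/-- Farkas' lemma for finitely generated cones, by induction on the number
of generators. -/
theorem myFarkas {κ : Type*} [Fintype κ] :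
    ∀ (q : ℕ) (d : Fin q → κ → ℝ) (b : κ → ℝ),
      (∃ μ : Fin q → ℝ, (∀ i, 0 ≤ μ i) ∧ b = ∑ i, μ i • d i) ∨
      (∃ l : κ → ℝ, (∀ i, l ⬝ᵥ d i ≤ 0) ∧ 0 < l ⬝ᵥ b) := by
  intro q
  induction q with
  | zero =>
    intro d b
    by_cases hb : b = 0
    · exact Or.inl ⟨fun _ => 0, fun i => le_refl _, by simp [hb]⟩
    · refine Or.inr ⟨b, fun i => i.elim0, ?_⟩
      obtain ⟨j, hj⟩ := Function.ne_iff.mp hb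
      exact Finset.sum_pos' (fun j _ => mul_self_nonneg _)
        ⟨j, Finset.mem_univ j, mul_self_pos.mpr hj⟩
  | succ q ih =>
    intro d b
    set d' : Fin q → κ → ℝ := fun i => d i.castSucc with hd'
    set dl : κ → ℝ := d (Fin.last q) with hdl
    rcases ih d' b with ⟨μ, hμ, hb⟩ | ⟨l, hl, hlb⟩
    · refine Or.inl ⟨Fin.snoc μ 0, ?_, ?_⟩
      · intro i
        induction i using Fin.lastCases with
        | last => simp
        | cast i => simpa using hμ i
      · rw [Fin.sum_univ_castSucc]
        simp only [Fin.snoc_castSucc, Fin.snoc_last, zero_smul, add_zero]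
        exact hb
    · by_cases hld : l ⬝ᵥ dl ≤ 0
      · refine Or.inr ⟨l, ?_, hlb⟩
        intro i
        induction i using Fin.lastCases with
        | last => exact hld
        | cast i => exact hl i
      · push_neg at hld
        have hldne : l ⬝ᵥ dl ≠ 0 := ne_of_gt hld
        set c : (κ → ℝ) → ℝ := fun v => (l ⬝ᵥ v) / (l ⬝ᵥ dl) with hc
        rcases ih (fun i => d' i - c (d' i) • dl) (b - c b • dl) with ⟨μ, hμ, hb⟩ | ⟨l', hl', hlb'⟩
        · have hcnp : ∀ i, c (d' i) ≤ 0 := fun i =>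
            div_nonpos_of_nonpos_of_nonneg (hl i) hld.le
          have hsum_np : ∑ i, μ i * c (d' i) ≤ 0 :=
            Finset.sum_nonpos (fun i _ => mul_nonpos_of_nonneg_of_nonpos (hμ i) (hcnp i))
          have hcb : 0 < c b := div_pos hlb hld
          set γ : ℝ := c b - ∑ i, μ i * c (d' i) with hγ
          have hγ0 : 0 ≤ γ := by simp only [hγ]; linarith
          refine Or.inl ⟨Fin.snoc μ γ, ?_, ?_⟩
          · intro i
            induction i using Fin.lastCases with
            | last => simpa using hγ0
            | cast i => simpa using hμ i
          · have h2 : ∑ i, μ i • (d' i - c (d' i) • dl)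
                = (∑ i, μ i • d' i) - (∑ i, μ i * c (d' i)) • dl := by
              rw [Finset.sum_smul, ← Finset.sum_sub_distrib]
              exact Finset.sum_congr rfl (fun i _ => by rw [smul_sub, mul_smul])
            rw [Fin.sum_univ_castSucc]
            simp only [Fin.snoc_castSucc, Fin.snoc_last]
            have h3 : b - c b • dl = (∑ i, μ i • d' i) - (∑ i, μ i * c (d' i)) • dl := by
              rw [hb, h2]
            have : b = (∑ i, μ i • d' i) + γ • dl := by
              rw [hγ, sub_smul]
              have := sub_eq_sub_iff_sub_eq_sub.mp h3
              abel_nf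
              abel_nf at h3 ⊢
              linear_combination (norm := abel) h3
            exact this
        · refine Or.inr ⟨l' - ((l' ⬝ᵥ dl) / (l ⬝ᵥ dl)) • l, ?_, ?_⟩
          · have key : ∀ v, (l' - ((l' ⬝ᵥ dl) / (l ⬝ᵥ dl)) • l) ⬝ᵥ v = l' ⬝ᵥ (v - c v • dl) := by
              intro v
              rw [sub_dotProduct, smul_dotProduct, dotProduct_sub, dotProduct_smul, hc]
              field_simp
              ring
            intro i
            induction i using Fin.lastCases with
            | last =>
              have : (l' - ((l' ⬝ᵥ dl) / (l ⬝ᵥ dl)) • l) ⬝ᵥ dl = 0 := by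
                rw [sub_dotProduct, smul_dotProduct, smul_eq_mul]
                field_simp
                ring
              rw [this]
            | cast i =>
              rw [key]
              exact hl' i
          · have key : (l' - ((l' ⬝ᵥ dl) / (l ⬝ᵥ dl)) • l) ⬝ᵥ b = l' ⬝ᵥ (b - c b • dl) := by
              rw [sub_dotProduct, smul_dotProduct, dotProduct_sub, dotProduct_smul, hc]
              field_simp
              ring
            rw [key]; exact hlb'

/-- Farkas' lemma, arbitrary finite index type. -/
theorem myFarkas' {κ ι : Type*} [Fintype κ] [Fintype ι] (d : ι → κ → ℝ) (b : κ → ℝ) :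
    (∃ μ : ι → ℝ, (∀ i, 0 ≤ μ i) ∧ b = ∑ i, μ i • d i) ∨
    (∃ l : κ → ℝ, (∀ i, l ⬝ᵥ d i ≤ 0) ∧ 0 < l ⬝ᵥ b) := by
  set e := Fintype.equivFin ι with he
  rcases myFarkas (Fintype.card ι) (fun i => d (e.symm i)) b with ⟨μ, hμ, hb⟩ | ⟨l, hl, hlb⟩
  · refine Or.inl ⟨fun i => μ (e i), fun i => hμ _, ?_⟩
    rw [hb, ← Equiv.sum_comp e (fun i => μ i • d (e.symm i))]
    simp
  · refine Or.inr ⟨l, fun i => ?_, hlb⟩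
    simpa using hl (e i)

/-- If the score vector of `a` lies on the Pareto boundary of the convex hull of
the set of all score vectors, then `a` is a de Borda winner for some strict
scoring `s` (i.e. `s_0 < s_1 < ... < s_{p-1}`). -/
theorem paretoBoundary_convexHull_eligible_strict {n p : ℕ} (hn : 1 ≤ n) (hp : 2 ≤ p)
    (u : Fin n → Equiv.Perm (Fin p)) (a : Fin p)
    (ha : ParetoOpt (convexHull ℝ (Set.range (scoreVec u))) (scoreVec u a)) :
    ∃ s : Fin p → ℝ, StrictMono s ∧
      ∀ b : Fin p, bordaEstimate u s b ≤ bordaEstimate u s a := by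
  classical
  set r : Fin p → Fin (p-1) → ℝ := scoreVec u with hr
  set V : (Fin p ⊕ Fin (p-1)) → (Option (Fin (p-1)) → ℝ) :=
    fun i => Sum.elim
      (fun x => fun o => o.elim (0:ℝ) (fun j => r x j - r a j))
      (fun j0 => fun o => o.elim (1:ℝ) (fun j => if j = j0 then -1 else 0)) i with hV
  set bb : Option (Fin (p-1)) → ℝ := fun o => o.elim (1:ℝ) (fun _ => 0) with hbb
  rcases myFarkas' V bb with ⟨μ, hμ, hb⟩ | ⟨l, hl, hlb⟩
  · -- contradiction with Pareto optimality
    exfalso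
    have hcoord : ∀ j : Fin (p-1),
        ∑ x : Fin p, μ (Sum.inl x) * (r x j - r a j) = μ (Sum.inr j) := by
      intro j
      have h := congrFun hb (some j)
      simp only [hbb, hV, Finset.sum_apply, Pi.smul_apply, smul_eq_mul,
        Fintype.sum_sum_type, Sum.elim_inl, Sum.elim_inr, Option.elim_some,
        mul_ite, mul_neg, mul_one, mul_zero, Finset.sum_ite_eq, Finset.mem_univ,
        if_true] at h
      linarith
    have hnone : (1:ℝ) = ∑ j : Fin (p-1), μ (Sum.inr j) := by
      have h := congrFun hb none
      simpa only [hbb, hV, Finset.sum_apply, Pi.smul_apply, smul_eq_mul,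
        Fintype.sum_sum_type, Sum.elim_inl, Sum.elim_inr, Option.elim_none,
        mul_one, mul_zero, Finset.sum_const_zero, zero_add] using h
    set σ : ℝ := ∑ x : Fin p, μ (Sum.inl x) with hσ
    have hσ0 : 0 ≤ σ := Finset.sum_nonneg (fun x _ => hμ _)
    have hσpos : 0 < σ := by
      rcases eq_or_lt_of_le hσ0 with h0 | h
      · exfalso
        have hall := (Finset.sum_eq_zero_iff_of_nonneg (fun x _ => hμ (Sum.inl x))).mp h0.symm
        have hz : ∀ j : Fin (p-1), μ (Sum.inr j) = 0 := by
          intro j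
          rw [← hcoord j]
          exact Finset.sum_eq_zero (fun x _ => by rw [hall x (Finset.mem_univ x)]; ring)
        rw [Finset.sum_congr rfl (fun j _ => hz j)] at hnone
        simp at hnone
      · exact h
    have hσne : σ ≠ 0 := ne_of_gt hσpos
    set f : Fin (p-1) → ℝ := Finset.univ.centerMass (fun x => μ (Sum.inl x)) r with hf
    have hfmem : f ∈ convexHull ℝ (Set.range r) :=
      Finset.centerMass_mem_convexHull _ (fun x _ => hμ _) hσpos
        (fun x _ => Set.mem_range_self x)
    have hfj : ∀ j, f j = r a j + σ⁻¹ * μ (Sum.inr j) := by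
      intro j
      have hsum : ∑ x : Fin p, μ (Sum.inl x) * r x j = μ (Sum.inr j) + σ * r a j := by
        have hexp : ∑ x : Fin p, μ (Sum.inl x) * (r x j - r a j)
            = (∑ x : Fin p, μ (Sum.inl x) * r x j) - σ * r a j := by
          rw [hσ, Finset.sum_mul, ← Finset.sum_sub_distrib]
          exact Finset.sum_congr rfl (fun x _ => by ring)
        have := hcoord j
        rw [hexp] at this
        linarith
      rw [hf, Finset.centerMass]
      simp only [Pi.smul_apply, Finset.sum_apply, smul_eq_mul, ← hσ]
      rw [hsum]
      field_simp
      ring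
    have hge : ∀ j, r a j ≤ f j := by
      intro j
      rw [hfj j]
      have := mul_nonneg (inv_nonneg.mpr hσ0) (hμ (Sum.inr j))
      linarith
    have hex : ∃ j0, 0 < μ (Sum.inr j0) := by
      by_contra hcon
      push_neg at hcon
      have : ∀ j ∈ (Finset.univ : Finset (Fin (p-1))), μ (Sum.inr j) = 0 :=
        fun j _ => le_antisymm (hcon j) (hμ _)
      rw [Finset.sum_eq_zero this] at hnone
      norm_num at hnone
    obtain ⟨j0, hj0⟩ := hex
    refine ha.2 ⟨f, hfmem, hge, j0, ?_⟩
    rw [hfj j0]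
    nlinarith [inv_pos.mpr hσpos]
  · -- construct the scoring
    have htpos : 0 < l none := by
      simpa [dotProduct, hbb, Fintype.sum_option] using hlb
    have hjpos : ∀ j, 0 < l (some j) := by
      intro j0
      have h := hl (Sum.inr j0)
      simp only [dotProduct, hV, Fintype.sum_option, Sum.elim_inr, Option.elim_none,
        Option.elim_some, mul_ite, mul_neg, mul_one, mul_zero,
        Finset.sum_ite_eq', Finset.mem_univ, if_true] at h
      linarith
    have hineq : ∀ x : Fin p, ∑ j, l (some j) * (r x j - r a j) ≤ 0 := by
      intro x
      have h := hl (Sum.inl x)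
      simpa [dotProduct, hV, Fintype.sum_option] using h
    set lam : Fin (p-1) → ℝ := fun j => l (some j) with hlam
    have hlampos : ∀ j, 0 < lam j := hjpos
    set s : Fin p → ℝ :=
      fun jj => ∑ j : Fin (p-1), if p - 1 - (jj:ℕ) ≤ (j:ℕ) then lam j else 0 with hs
    have hborda : ∀ x : Fin p, bordaEstimate u s x = ∑ j, lam j * r x j := by
      intro x
      have hcond : ∀ i : Fin n, ∀ j : Fin (p-1),
          (p - 1 - ((Fin.rev (u i x) : Fin p) : ℕ) ≤ (j : ℕ)) ↔
            (((u i x : Fin p) : ℕ) ≤ (j : ℕ)) := by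
        intro i j
        rw [Fin.val_rev]
        have h1 := (u i x).isLt
        omega
      calc bordaEstimate u s x
          = ∑ i : Fin n, ∑ j : Fin (p-1),
              (if ((u i x : Fin p):ℕ) ≤ (j:ℕ) then lam j else 0) := by
            unfold bordaEstimate
            refine Finset.sum_congr rfl (fun i _ => ?_)
            rw [hs]
            exact Finset.sum_congr rfl (fun j _ => by rw [if_congr (hcond i j) rfl rfl])
        _ = ∑ j : Fin (p-1), ∑ i : Fin n,
              (if ((u i x : Fin p):ℕ) ≤ (j:ℕ) then lam j else 0) := Finset.sum_comm
        _ = ∑ j, lam j * r x j := by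
            refine Finset.sum_congr rfl (fun j _ => ?_)
            rw [← Finset.sum_filter, Finset.sum_const, nsmul_eq_mul, mul_comm]
            rw [hr]
            rfl
    refine ⟨s, ?_, ?_⟩
    · intro j j' hjj
      have hvlt : (j:ℕ) < (j':ℕ) := hjj
      have hj'lt : (j':ℕ) < p := j'.isLt
      rw [hs]
      simp only
      rw [← Finset.sum_filter, ← Finset.sum_filter]
      have hmem : p - 1 - (j':ℕ) < p - 1 := by omega
      refine Finset.sum_lt_sum_of_subset (i := (⟨p - 1 - (j':ℕ), hmem⟩ : Fin (p-1)))
        ?_ ?_ ?_ (hlampos _) (fun k _ _ => (hlampos k).le)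
      · intro k hk
        simp only [Finset.mem_filter, Finset.mem_univ, true_and] at hk ⊢
        omega
      · simp only [Finset.mem_filter, Finset.mem_univ, true_and]
        omega
      · simp only [Finset.mem_filter, Finset.mem_univ, true_and, not_le]
        omega
    · intro x
      rw [hborda x, hborda a]
      have h := hineq x
      have hexp : ∑ j, lam j * (r x j - r a j)
          = (∑ j, lam j * r x j) - ∑ j, lam j * r a j := by
        rw [← Finset.sum_sub_distrib]
        exact Finset.sum_congr rfl (fun j _ => by ring)
      rw [hlam] at hexp
      simp only [hlam]
      linarith [hexp ▸ h]
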